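/- Let (V,E) be a graph, L a laminar family on V, and b ∈ N^L. Suppose for every S ∈ L there is no edge of E between two distinct children of S in L, and suppose the system {x(δ(S)) = b_S : S ∈ L} (one equation per S, over variables indexed by E) has a unique solution x* with 0 < x*_e < 1 for all e ∈ E. Then x*_e = 1/2 for all e ∈ E, and moreover each endpoint of every edge e ∈ E belongs to some set S ∈ L. -/

import Mathlib

open scoped Classical


/-- `C` is a child of `S` in the laminar family `L`: a maximal member of `L` properly
contained in `S`. -/
def IsChild {V : Type*} [DecidableEq V] (L : Finset (Finset V)) (C S : Finset V) : Prop :=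
  C ∈ L ∧ C ⊂ S ∧ ∀ T ∈ L, C ⊂ T → ¬ T ⊂ S

/-- `δ(S)`: the set of edges (given by endpoint maps `ep1, ep2`) with exactly one endpoint
in `S`. -/
def cutEdges {V E : Type*} [Fintype E] [DecidableEq V] (ep1 ep2 : E → V) (S : Finset V) :
    Finset E :=
  Finset.univ.filter fun e => (ep1 e ∈ S ∧ ep2 e ∉ S) ∨ (ep1 e ∉ S ∧ ep2 e ∈ S)

/-- The chain of members of `L` containing `w`. -/
def chains {V : Type*} [DecidableEq V] (L : Finset (Finset V)) (w : V) : Finset (Finset V) :=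
  L.filter (fun S => w ∈ S)

/-- Möbius-type inversion: `cAux L H S = H S - ∑_{T ∈ L, S ⊂ T} cAux L H T`. -/
noncomputable def cAux {V : Type*} [DecidableEq V] (L : Finset (Finset V)) (H : Finset V → ℝ) :
    Finset V → ℝ := fun S =>
  H S - ∑ T ∈ (L.filter (fun T => S ⊂ T)).attach, cAux L H T.1
termination_by S => (L.filter (fun T => S ⊂ T)).card
decreasing_by
  simp_wf
  obtain ⟨T, hT⟩ := T
  rw [Finset.mem_filter] at hT
  apply Finset.card_lt_card
  constructor
  · intro U hU
    rw [Finset.mem_filter] at hU ⊢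
    exact ⟨hU.1, hT.2.trans hU.2⟩
  · intro hsub
    have h2 := hsub (Finset.mem_filter.mpr hT)
    rw [Finset.mem_filter] at h2
    exact (lt_irrefl _ h2.2)

lemma cAux_spec {V : Type*} [DecidableEq V] (L : Finset (Finset V)) (H : Finset V → ℝ)
    (S : Finset V) :
    cAux L H S = H S - ∑ T ∈ L.filter (fun T => S ⊂ T), cAux L H T := by
  rw [cAux]
  rw [← Finset.sum_attach (L.filter (fun T => S ⊂ T)) (fun T => cAux L H T)]

lemma cAux_upsum {V : Type*} [DecidableEq V] (L : Finset (Finset V)) (H : Finset V → ℝ)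
    {S : Finset V} (hS : S ∈ L) :
    ∑ T ∈ L.filter (fun T => S ⊆ T), cAux L H T = H S := by
  have hins : L.filter (fun T => S ⊆ T) = insert S (L.filter (fun T => S ⊂ T)) := by
    ext T
    simp only [Finset.mem_filter, Finset.mem_insert]
    constructor
    · rintro ⟨hTL, hsub⟩
      rcases eq_or_ne T S with rfl | hne
      · exact Or.inl rfl
      · exact Or.inr ⟨hTL, lt_of_le_of_ne hsub (Ne.symm hne)⟩
    · rintro (rfl | ⟨hTL, hsub⟩)
      · exact ⟨hS, le_rfl⟩
      · exact ⟨hTL, le_of_lt hsub⟩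
  rw [hins, Finset.sum_insert (by simp only [Finset.mem_filter]; rintro ⟨-, h⟩; exact ssubset_irrefl S h), cAux_spec]
  ring

lemma cAux_mem {V : Type*} [DecidableEq V] (L : Finset (Finset V)) (H : Finset V → ℝ)
    (A : AddSubgroup ℝ) (hH : ∀ S, H S ∈ A) : ∀ S, cAux L H S ∈ A := by
  suffices h : ∀ n S, (L.filter (fun T => S ⊂ T)).card ≤ n → cAux L H S ∈ A by
    intro S; exact h _ S le_rfl
  intro n
  induction n with
  | zero =>
    intro S hcard
    have hempty : L.filter (fun T => S ⊂ T) = ∅ := Finset.card_eq_zero.mp (Nat.le_zero.mp hcard)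
    rw [cAux_spec, hempty]
    simpa using A.sub_mem (hH S) A.zero_mem
  | succ n ih =>
    intro S hcard
    rw [cAux_spec]
    refine A.sub_mem (hH S) (AddSubgroup.sum_mem A ?_)
    intro T hT
    rw [Finset.mem_filter] at hT
    refine ih T ?_
    have hlt : (L.filter (fun U => T ⊂ U)).card < (L.filter (fun U => S ⊂ U)).card := by
      apply Finset.card_lt_card
      constructor
      · intro U hU
        rw [Finset.mem_filter] at hU ⊢
        exact ⟨hU.1, hT.2.trans hU.2⟩
      · intro hsub
        have h2 := hsub (Finset.mem_filter.mpr ⟨hT.1, hT.2⟩)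
        rw [Finset.mem_filter] at h2
        exact (lt_irrefl _ h2.2)
    omega

/-- Reachability in the constraint graph from the endpoints of `f`. -/
inductive Reach {V E : Type*} [DecidableEq V] (ep1 ep2 : E → V) (L : Finset (Finset V)) (f : E) :
    V → Prop
  | base : Reach ep1 ep2 L f (ep1 f)
  | fwd (g : E) : Reach ep1 ep2 L f (ep1 g) → Reach ep1 ep2 L f (ep2 g)
  | bwd (g : E) : Reach ep1 ep2 L f (ep2 g) → Reach ep1 ep2 L f (ep1 g)
  | eqs (w w' : V) : Reach ep1 ep2 L f w → chains L w = chains L w' → Reach ep1 ep2 L f w'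

open Classical in
/-- Walks carrying affine data `(a, β)` so that any solution satisfies
`σ w = a · σ (ep1 f) + β`. -/
inductive Wk {V E : Type*} [DecidableEq V] (ep1 ep2 : E → V) (L : Finset (Finset V)) (f : E) :
    V → ℤ → ℤ → Prop
  | base : Wk ep1 ep2 L f (ep1 f) 1 0
  | fwd0 (g : E) (a β : ℤ) : Wk ep1 ep2 L f (ep1 g) a β →
      chains L (ep1 g) ∩ chains L (ep2 g) = ∅ →
      Wk ep1 ep2 L f (ep2 g) (-a) ((if g = f then 1 else 0) - β)
  | fwd1 (g : E) (a β : ℤ) : Wk ep1 ep2 L f (ep1 g) a β →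
      chains L (ep1 g) ⊆ chains L (ep2 g) →
      Wk ep1 ep2 L f (ep2 g) a (β + (if g = f then 1 else 0))
  | fwd2 (g : E) (a β : ℤ) : Wk ep1 ep2 L f (ep1 g) a β →
      chains L (ep2 g) ⊆ chains L (ep1 g) →
      Wk ep1 ep2 L f (ep2 g) a (β - (if g = f then 1 else 0))
  | bwd0 (g : E) (a β : ℤ) : Wk ep1 ep2 L f (ep2 g) a β →
      chains L (ep1 g) ∩ chains L (ep2 g) = ∅ →
      Wk ep1 ep2 L f (ep1 g) (-a) ((if g = f then 1 else 0) - β)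
  | bwd1 (g : E) (a β : ℤ) : Wk ep1 ep2 L f (ep2 g) a β →
      chains L (ep1 g) ⊆ chains L (ep2 g) →
      Wk ep1 ep2 L f (ep1 g) a (β - (if g = f then 1 else 0))
  | bwd2 (g : E) (a β : ℤ) : Wk ep1 ep2 L f (ep2 g) a β →
      chains L (ep2 g) ⊆ chains L (ep1 g) →
      Wk ep1 ep2 L f (ep1 g) a (β + (if g = f then 1 else 0))
  | uncov (w : V) : chains L w = ∅ → Wk ep1 ep2 L f w 0 0
  | eqs (w w' : V) (a β : ℤ) : Wk ep1 ep2 L f w a β → chains L w = chains L w' →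
      Wk ep1 ep2 L f w' a β

/-- Edge-type trichotomy from laminarity plus the no-edge-between-children condition. -/
lemma edge_type {V E : Type*} [Fintype E] [DecidableEq V]
    (ep1 ep2 : E → V) (L : Finset (Finset V))
    (hlam : ∀ S ∈ L, ∀ T ∈ L, S ⊆ T ∨ T ⊆ S ∨ Disjoint S T)
    (hnochild : ∀ S ∈ L, ∀ C1 C2 : Finset V, IsChild L C1 S → IsChild L C2 S → C1 ≠ C2 →
      ∀ e : E, ¬ (ep1 e ∈ C1 ∧ ep2 e ∈ C2) ∧ ¬ (ep1 e ∈ C2 ∧ ep2 e ∈ C1))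
    (g : E) :
    chains L (ep1 g) ∩ chains L (ep2 g) = ∅ ∨
    chains L (ep1 g) ⊆ chains L (ep2 g) ∨
    chains L (ep2 g) ⊆ chains L (ep1 g) := by
  classical
  by_contra hcon
  push_neg at hcon
  obtain ⟨h0, h1, h2⟩ := hcon
  set p := ep1 g with hp
  set q := ep2 g with hq
  have hne : (L.filter (fun S => p ∈ S ∧ q ∈ S)).Nonempty := by
    rw [Finset.filter_and]
    exact h0
  obtain ⟨A, hAmem, hAmin⟩ := Finset.exists_min_image _ Finset.card hne
  rw [Finset.mem_filter] at hAmem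
  obtain ⟨hAL, hpA, hqA⟩ := hAmem
  obtain ⟨Tp, hTp, hTp'⟩ := Finset.not_subset.mp h1
  obtain ⟨Tq, hTq, hTq'⟩ := Finset.not_subset.mp h2
  rw [chains, Finset.mem_filter] at hTp hTq
  rw [chains, Finset.mem_filter] at hTp' hTq'
  push_neg at hTp' hTq'
  have hTpq : q ∉ Tp := hTp' hTp.1
  have hTqp : p ∉ Tq := hTq' hTq.1
  -- Tp ⊂ A
  have hTpA : Tp ⊂ A := by
    rcases hlam Tp hTp.1 A hAL with h | h | h
    · exact lt_of_le_of_ne h (by rintro rfl; exact hTpq hqA)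
    · exact absurd (h hqA) hTpq
    · exact absurd hTp.2 (Finset.disjoint_right.mp h hpA)
  have hTqA : Tq ⊂ A := by
    rcases hlam Tq hTq.1 A hAL with h | h | h
    · exact lt_of_le_of_ne h (by rintro rfl; exact hTqp hpA)
    · exact absurd (h hpA) hTqp
    · exact absurd hTq.2 (Finset.disjoint_right.mp h hqA)
  -- children
  have hne1 : (L.filter (fun T => p ∈ T ∧ T ⊂ A)).Nonempty :=
    ⟨Tp, Finset.mem_filter.mpr ⟨hTp.1, hTp.2, hTpA⟩⟩
  have hne2 : (L.filter (fun T => q ∈ T ∧ T ⊂ A)).Nonempty :=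
    ⟨Tq, Finset.mem_filter.mpr ⟨hTq.1, hTq.2, hTqA⟩⟩
  obtain ⟨C1, hC1mem, hC1max⟩ := Finset.exists_max_image _ Finset.card hne1
  obtain ⟨C2, hC2mem, hC2max⟩ := Finset.exists_max_image _ Finset.card hne2
  rw [Finset.mem_filter] at hC1mem hC2mem
  have child1 : IsChild L C1 A := by
    refine ⟨hC1mem.1, hC1mem.2.2, ?_⟩
    intro T hT hCT hTA
    have hpT : p ∈ T := hCT.subset hC1mem.2.1
    have := hC1max T (Finset.mem_filter.mpr ⟨hT, hpT, hTA⟩)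
    exact absurd (Finset.card_lt_card hCT) (by omega)
  have child2 : IsChild L C2 A := by
    refine ⟨hC2mem.1, hC2mem.2.2, ?_⟩
    intro T hT hCT hTA
    have hqT : q ∈ T := hCT.subset hC2mem.2.1
    have := hC2max T (Finset.mem_filter.mpr ⟨hT, hqT, hTA⟩)
    exact absurd (Finset.card_lt_card hCT) (by omega)
  have hC12 : C1 ≠ C2 := by
    rintro rfl
    have hmem : C1 ∈ L.filter (fun S => p ∈ S ∧ q ∈ S) :=
      Finset.mem_filter.mpr ⟨hC1mem.1, hC1mem.2.1, hC2mem.2.1⟩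
    have := hAmin C1 hmem
    exact absurd (Finset.card_lt_card hC1mem.2.2) (by omega)
  have := hnochild A hAL C1 C2 child1 child2 hC12 g
  exact this.1 ⟨hC1mem.2.1, hC2mem.2.1⟩

def sigs {V : Type*} [DecidableEq V] (L : Finset (Finset V)) (d : Finset V → ℝ) (w : V) : ℝ :=
  ∑ T ∈ chains L w, d T

lemma sigs_def {V : Type*} [DecidableEq V] (L : Finset (Finset V)) (d : Finset V → ℝ) (w : V) :
    sigs L d w = ∑ T ∈ chains L w, d T := rfl

lemma tau_rw {V : Type*} [DecidableEq V] (L : Finset (Finset V)) (p q : V) :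
    L.filter (fun S => p ∈ S ∧ q ∈ S) = chains L p ∩ chains L q := by
  rw [chains, chains, ← Finset.filter_and]

lemma master {V E : Type*} [Fintype E] [DecidableEq V] (ep1 ep2 : E → V)
    (L : Finset (Finset V)) (d : Finset V → ℝ) (g : E) :
    ∑ S ∈ L, d S * (if g ∈ cutEdges ep1 ep2 S then (1:ℝ) else 0)
      = sigs L d (ep1 g) + sigs L d (ep2 g)
        - 2 * ∑ T ∈ L.filter (fun S => ep1 g ∈ S ∧ ep2 g ∈ S), d T := by
  classical
  rw [sigs_def, sigs_def, chains, chains]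
  rw [Finset.sum_filter, Finset.sum_filter, Finset.sum_filter, Finset.mul_sum,
    ← Finset.sum_add_distrib, ← Finset.sum_sub_distrib]
  apply Finset.sum_congr rfl
  intro S hS
  by_cases h1 : ep1 g ∈ S <;> by_cases h2 : ep2 g ∈ S <;>
    simp [cutEdges, h1, h2] <;> ring

lemma key_sum {V E : Type*} [Fintype E] [DecidableEq V] (ep1 ep2 : E → V)
    (L : Finset (Finset V)) (b : Finset V → ℕ) (xs : E → ℝ)
    (heq : ∀ S ∈ L, ∑ e ∈ cutEdges ep1 ep2 S, xs e = (b S : ℝ)) (f : E) (d : Finset V → ℝ)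
    (hd : ∀ g : E, ∑ S ∈ L, d S * (if g ∈ cutEdges ep1 ep2 S then (1:ℝ) else 0)
      = (if g = f then 1 else 0)) :
    ∑ S ∈ L, d S * (b S : ℝ) = xs f := by
  classical
  have hrow : ∀ S : Finset V, (∑ e ∈ cutEdges ep1 ep2 S, xs e)
      = ∑ g : E, (if g ∈ cutEdges ep1 ep2 S then (1:ℝ) else 0) * xs g := by
    intro S
    simp only [ite_mul, one_mul, zero_mul]
    rw [Finset.sum_ite_mem, Finset.univ_inter]
  calc ∑ S ∈ L, d S * (b S : ℝ)
      = ∑ S ∈ L, ∑ g : E, d S * ((if g ∈ cutEdges ep1 ep2 S then (1:ℝ) else 0) * xs g) := by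
        refine Finset.sum_congr rfl fun S hS => ?_
        rw [← heq S hS, hrow S, Finset.mul_sum]
    _ = ∑ g : E, ∑ S ∈ L, d S * ((if g ∈ cutEdges ep1 ep2 S then (1:ℝ) else 0) * xs g) :=
        Finset.sum_comm
    _ = ∑ g : E, (∑ S ∈ L, d S * (if g ∈ cutEdges ep1 ep2 S then (1:ℝ) else 0)) * xs g := by
        refine Finset.sum_congr rfl fun g _ => ?_
        rw [Finset.sum_mul]
        exact Finset.sum_congr rfl fun S _ => by ring
    _ = ∑ g : E, (if g = f then (1:ℝ) else 0) * xs g := by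
        refine Finset.sum_congr rfl fun g _ => ?_
        rw [hd g]
    _ = xs f := by
        simp only [ite_mul, one_mul, zero_mul, Finset.sum_ite_eq', Finset.mem_univ, if_true]

lemma span_lemma {V E : Type*} [Fintype E] [DecidableEq V] (ep1 ep2 : E → V)
    (L : Finset (Finset V)) (b : Finset V → ℕ) (xs : E → ℝ)
    (heq : ∀ S ∈ L, ∑ e ∈ cutEdges ep1 ep2 S, xs e = (b S : ℝ))
    (huniq : ∀ y : E → ℝ, (∀ S ∈ L, ∑ e ∈ cutEdges ep1 ep2 S, y e = (b S : ℝ)) → y = xs)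
    (f : E) :
    ∃ c : Finset V → ℝ, ∀ g : E,
      ∑ S ∈ L, c S * (if g ∈ cutEdges ep1 ep2 S then (1:ℝ) else 0)
        = (if g = f then 1 else 0) := by
  classical
  set v : {S // S ∈ L} → EuclideanSpace ℝ E :=
    fun S => WithLp.toLp 2 (fun e => if e ∈ cutEdges ep1 ep2 S.1 then (1:ℝ) else 0) with hv
  have horth : (Submodule.span ℝ (Set.range v))ᗮ = ⊥ := by
    rw [Submodule.eq_bot_iff]
    intro z hz
    have hz' : ∀ S ∈ L, ∑ e ∈ cutEdges ep1 ep2 S, z e = 0 := by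
      intro S hS
      have hm : v ⟨S, hS⟩ ∈ Submodule.span ℝ (Set.range v) :=
        Submodule.subset_span (Set.mem_range_self _)
      have hinner := (Submodule.mem_orthogonal _ z).mp hz _ hm
      rw [PiLp.inner_apply] at hinner
      simp only [hv, RCLike.inner_apply, conj_trivial] at hinner
      rw [← hinner]
      symm
      simp only [mul_ite, mul_one, mul_zero]
      rw [Finset.sum_ite_mem, Finset.univ_inter]
    have hsol := huniq (fun e => xs e + z e) (by
      intro S hS
      rw [Finset.sum_add_distrib, heq S hS, hz' S hS, add_zero])
    ext e
    have := congrFun hsol e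
    simpa using this
  have htop : Submodule.span ℝ (Set.range v) = ⊤ :=
    Submodule.orthogonal_eq_bot_iff.mp horth
  have hef : (WithLp.toLp 2 (fun g => if g = f then (1:ℝ) else 0) : EuclideanSpace ℝ E)
      ∈ Submodule.span ℝ (Set.range v) := by
    rw [htop]; exact Submodule.mem_top
  rw [Submodule.mem_span_range_iff_exists_fun] at hef
  obtain ⟨cc, hcc⟩ := hef
  refine ⟨fun S => if h : S ∈ L then cc ⟨S, h⟩ else 0, ?_⟩
  intro g
  have happ := congrArg (fun z : EuclideanSpace ℝ E => z g) hcc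
  have hsum : (∑ i : {S // S ∈ L}, cc i • v i) g = ∑ i : {S // S ∈ L}, cc i * v i g := by
    rw [show ((∑ i : {S // S ∈ L}, cc i • v i) g) = ∑ i : {S // S ∈ L}, (cc i • v i) g from
      by rw [WithLp.ofLp_sum, Finset.sum_apply]]
    exact Finset.sum_congr rfl fun i _ => rfl
  rw [hsum] at happ
  have hfin : (∑ S ∈ L, (if h : S ∈ L then cc ⟨S, h⟩ else 0)
        * (if g ∈ cutEdges ep1 ep2 S then (1:ℝ) else 0))
      = ∑ i ∈ L.attach, cc i * (if g ∈ cutEdges ep1 ep2 i.1 then (1:ℝ) else 0) := by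
    rw [← Finset.sum_attach L (fun S => (if h : S ∈ L then cc ⟨S, h⟩ else 0)
      * (if g ∈ cutEdges ep1 ep2 S then (1:ℝ) else 0))]
    exact Finset.sum_congr rfl fun i _ => by rw [dif_pos i.2]
  rw [hfin]
  rw [Finset.univ_eq_attach] at happ
  exact happ

lemma construct {V E : Type*} [Fintype E] [DecidableEq V] (ep1 ep2 : E → V)
    (L : Finset (Finset V))
    (hlam : ∀ S ∈ L, ∀ T ∈ L, S ⊆ T ∨ T ⊆ S ∨ Disjoint S T)
    (hnochild : ∀ S ∈ L, ∀ C1 C2 : Finset V, IsChild L C1 S → IsChild L C2 S → C1 ≠ C2 →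
      ∀ e : E, ¬ (ep1 e ∈ C1 ∧ ep2 e ∈ C2) ∧ ¬ (ep1 e ∈ C2 ∧ ep2 e ∈ C1))
    (f : E) (A : AddSubgroup ℝ) (val : V → ℝ)
    (hV0 : ∀ w, chains L w = ∅ → val w = 0)
    (hV1 : ∀ w, Reach ep1 ep2 L f w → val w ∈ A)
    (hV2 : ∀ w w', Reach ep1 ep2 L f w → Reach ep1 ep2 L f w' → chains L w = chains L w' →
      val w = val w')
    (hV3 : ∀ g : E, Reach ep1 ep2 L f (ep1 g) →
      (chains L (ep1 g) ∩ chains L (ep2 g) = ∅ →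
        val (ep1 g) + val (ep2 g) = (if g = f then (1:ℝ) else 0)) ∧
      (chains L (ep1 g) ⊆ chains L (ep2 g) →
        val (ep2 g) - val (ep1 g) = (if g = f then (1:ℝ) else 0)) ∧
      (chains L (ep2 g) ⊆ chains L (ep1 g) →
        val (ep1 g) - val (ep2 g) = (if g = f then (1:ℝ) else 0))) :
    ∃ d : Finset V → ℝ, (∀ S, d S ∈ A) ∧
      (∀ g : E, ∑ S ∈ L, d S * (if g ∈ cutEdges ep1 ep2 S then (1:ℝ) else 0)
        = (if g = f then 1 else 0)) := by
  have smin : ∀ w : V, (chains L w).Nonempty →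
      ∃ M, M ∈ L ∧ w ∈ M ∧ ∀ T ∈ L, w ∈ T → M ⊆ T := by
    intro w hne
    obtain ⟨M, hM, hMmin⟩ := Finset.exists_min_image _ Finset.card hne
    rw [chains, Finset.mem_filter] at hM
    refine ⟨M, hM.1, hM.2, ?_⟩
    intro T hT hwT
    rcases hlam M hM.1 T hT with h | h | h
    · exact h
    · have hTM : T = M := Finset.eq_of_subset_of_card_le h
        (hMmin T (by rw [chains, Finset.mem_filter]; exact ⟨hT, hwT⟩))
      rw [hTM]
    · exact absurd hM.2 (Finset.disjoint_right.mp h hwT)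
  have chain_eq : ∀ (w : V) (M : Finset V), w ∈ M → (∀ T ∈ L, w ∈ T → M ⊆ T) →
      chains L w = L.filter (fun T => M ⊆ T) := by
    intro w M hwM hmin
    ext T
    rw [chains, Finset.mem_filter, Finset.mem_filter]
    constructor
    · rintro ⟨hTL, hwT⟩; exact ⟨hTL, hmin T hTL hwT⟩
    · rintro ⟨hTL, hMT⟩; exact ⟨hTL, hMT hwM⟩
  set H : Finset V → ℝ := fun Sm =>
    if h : ∃ w, Reach ep1 ep2 L f w ∧ w ∈ Sm ∧ ∀ T ∈ L, w ∈ T → Sm ⊆ T then val h.choose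
    else 0 with hH
  refine ⟨cAux L H, ?_, ?_⟩
  · refine cAux_mem L H A ?_
    intro S
    rw [hH]
    dsimp only
    split
    · next h => exact hV1 _ h.choose_spec.1
    · exact A.zero_mem
  · intro g
    have sig_reach : ∀ w, Reach ep1 ep2 L f w → sigs L (cAux L H) w = val w := by
      intro w hw
      by_cases hcov : (chains L w).Nonempty
      · obtain ⟨M, hML, hwM, hmin⟩ := smin w hcov
        have hch := chain_eq w M hwM hmin
        rw [sigs_def, hch, cAux_upsum L H hML, hH]
        dsimp only
        have hex : ∃ w', Reach ep1 ep2 L f w' ∧ w' ∈ M ∧ ∀ T ∈ L, w' ∈ T → M ⊆ T :=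
          ⟨w, hw, hwM, hmin⟩
        rw [dif_pos hex]
        obtain ⟨hr0, hm0, hmin0⟩ := hex.choose_spec
        refine hV2 _ _ hr0 hw ?_
        rw [chain_eq _ M hm0 hmin0, hch]
      · have hemp : chains L w = ∅ := Finset.not_nonempty_iff_eq_empty.mp hcov
        rw [sigs_def, hemp, Finset.sum_empty, hV0 w hemp]
    have sig_unreach : ∀ w, ¬ Reach ep1 ep2 L f w → sigs L (cAux L H) w = 0 := by
      intro w hw
      by_cases hcov : (chains L w).Nonempty
      · obtain ⟨M, hML, hwM, hmin⟩ := smin w hcov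
        rw [sigs_def, chain_eq w M hwM hmin, cAux_upsum L H hML, hH]
        dsimp only
        rw [dif_neg]
        rintro ⟨w', hr', hm', hmin'⟩
        exact hw (Reach.eqs w' w hr'
          (by rw [chain_eq w' M hm' hmin', chain_eq w M hwM hmin]))
      · rw [sigs_def, Finset.not_nonempty_iff_eq_empty.mp hcov, Finset.sum_empty]
    rw [master ep1 ep2 L (cAux L H) g]
    by_cases hrp : Reach ep1 ep2 L f (ep1 g)
    · have hrq : Reach ep1 ep2 L f (ep2 g) := Reach.fwd g hrp
      have hsp := sig_reach _ hrp
      have hsq := sig_reach _ hrq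
      obtain ⟨e0, e1, e2⟩ := hV3 g hrp
      rcases edge_type ep1 ep2 L hlam hnochild g with h | h | h
      · rw [tau_rw, h, Finset.sum_empty, hsp, hsq]
        have := e0 h; linarith
      · rw [tau_rw, Finset.inter_eq_left.mpr h, ← sigs_def, hsp, hsq]
        have := e1 h; linarith
      · rw [tau_rw, Finset.inter_eq_right.mpr h, ← sigs_def, hsp, hsq]
        have := e2 h; linarith
    · have hrq : ¬ Reach ep1 ep2 L f (ep2 g) := fun h => hrp (Reach.bwd g h)
      have hgf : g ≠ f := by rintro rfl; exact hrp Reach.base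
      have hsp := sig_unreach _ hrp
      have hsq := sig_unreach _ hrq
      rw [if_neg hgf]
      rcases edge_type ep1 ep2 L hlam hnochild g with h | h | h
      · rw [tau_rw, h, Finset.sum_empty, hsp, hsq]; ring
      · rw [tau_rw, Finset.inter_eq_left.mpr h, ← sigs_def, hsp, hsq]; ring
      · rw [tau_rw, Finset.inter_eq_right.mpr h, ← sigs_def, hsp, hsq]; ring

/-- Half-integrality lemma: if `L` is laminar, no edge joins two distinct children of any
`S ∈ L`, and the system `{x(δ(S)) = b_S : S ∈ L}` has a unique solution `x*` with
`0 < x* < 1`, then `x*_e = 1/2` for every edge `e`, and each endpoint of every edge lies in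
some member of `L`. -/
theorem stmt_5 {V E : Type*} [Fintype E] [DecidableEq V]
    (ep1 ep2 : E → V) (L : Finset (Finset V))
    (hlam : ∀ S ∈ L, ∀ T ∈ L, S ⊆ T ∨ T ⊆ S ∨ Disjoint S T)
    (b : Finset V → ℕ)
    (hnochild : ∀ S ∈ L, ∀ C1 C2 : Finset V, IsChild L C1 S → IsChild L C2 S → C1 ≠ C2 →
      ∀ e : E, ¬ (ep1 e ∈ C1 ∧ ep2 e ∈ C2) ∧ ¬ (ep1 e ∈ C2 ∧ ep2 e ∈ C1))
    (xs : E → ℝ)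
    (hbounds : ∀ e, 0 < xs e ∧ xs e < 1)
    (heq : ∀ S ∈ L, ∑ e ∈ cutEdges ep1 ep2 S, xs e = (b S : ℝ))
    (huniq : ∀ y : E → ℝ, (∀ S ∈ L, ∑ e ∈ cutEdges ep1 ep2 S, y e = (b S : ℝ)) → y = xs) :
    (∀ e, xs e = 1/2) ∧
    (∀ e : E, (∃ S ∈ L, ep1 e ∈ S) ∧ (∃ S ∈ L, ep2 e ∈ S)) := by
  have per_f : ∀ f : E, xs f = 1/2 ∧ ((∃ S ∈ L, ep1 f ∈ S) ∧ (∃ S ∈ L, ep2 f ∈ S)) := by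
    intro f
    have hcast : ∀ g : E, (((if g = f then (1:ℤ) else 0) : ℤ) : ℝ)
        = (if g = f then (1:ℝ) else 0) := by
      intro g; split <;> norm_num
    obtain ⟨c, hc⟩ := span_lemma ep1 ep2 L b xs heq huniq f
    have SIG : ∀ g : E,
        (chains L (ep1 g) ∩ chains L (ep2 g) = ∅ →
          sigs L c (ep1 g) + sigs L c (ep2 g) = (if g = f then (1:ℝ) else 0)) ∧
        (chains L (ep1 g) ⊆ chains L (ep2 g) →
          sigs L c (ep2 g) - sigs L c (ep1 g) = (if g = f then (1:ℝ) else 0)) ∧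
        (chains L (ep2 g) ⊆ chains L (ep1 g) →
          sigs L c (ep1 g) - sigs L c (ep2 g) = (if g = f then (1:ℝ) else 0)) := by
      intro g
      have hm := master ep1 ep2 L c g
      rw [hc g] at hm
      refine ⟨fun h => ?_, fun h => ?_, fun h => ?_⟩
      · rw [tau_rw, h, Finset.sum_empty] at hm; linarith
      · rw [tau_rw, Finset.inter_eq_left.mpr h, ← sigs_def] at hm; linarith
      · rw [tau_rw, Finset.inter_eq_right.mpr h, ← sigs_def] at hm; linarith
    have prop : ∀ (A : AddSubgroup ℝ), (1:ℝ) ∈ A → sigs L c (ep1 f) ∈ A →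
        ∀ w, Reach ep1 ep2 L f w → sigs L c w ∈ A := by
      intro A h1 hbase w hw
      induction hw with
      | base => exact hbase
      | fwd g hg ih =>
        have hite : (if g = f then (1:ℝ) else 0) ∈ A := by
          split
          · exact h1
          · exact A.zero_mem
        rcases edge_type ep1 ep2 L hlam hnochild g with h | h | h
        · have h0 := (SIG g).1 h
          have he : sigs L c (ep2 g) = (if g = f then (1:ℝ) else 0) - sigs L c (ep1 g) := by
            linarith
          rw [he]; exact A.sub_mem hite ih
        · have h0 := (SIG g).2.1 h
          have he : sigs L c (ep2 g) = (if g = f then (1:ℝ) else 0) + sigs L c (ep1 g) := by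
            linarith
          rw [he]; exact A.add_mem hite ih
        · have h0 := (SIG g).2.2 h
          have he : sigs L c (ep2 g) = sigs L c (ep1 g) - (if g = f then (1:ℝ) else 0) := by
            linarith
          rw [he]; exact A.sub_mem ih hite
      | bwd g hg ih =>
        have hite : (if g = f then (1:ℝ) else 0) ∈ A := by
          split
          · exact h1
          · exact A.zero_mem
        rcases edge_type ep1 ep2 L hlam hnochild g with h | h | h
        · have h0 := (SIG g).1 h
          have he : sigs L c (ep1 g) = (if g = f then (1:ℝ) else 0) - sigs L c (ep2 g) := by
            linarith
          rw [he]; exact A.sub_mem hite ih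
        · have h0 := (SIG g).2.1 h
          have he : sigs L c (ep1 g) = sigs L c (ep2 g) - (if g = f then (1:ℝ) else 0) := by
            linarith
          rw [he]; exact A.sub_mem ih hite
        · have h0 := (SIG g).2.2 h
          have he : sigs L c (ep1 g) = (if g = f then (1:ℝ) else 0) + sigs L c (ep2 g) := by
            linarith
          rw [he]; exact A.add_mem hite ih
      | eqs w w' hw hch ih =>
        have he : sigs L c w' = sigs L c w := by rw [sigs_def, sigs_def, ← hch]
        rw [he]; exact ih
    have hV0s : ∀ w, chains L w = ∅ → sigs L c w = 0 := by
      intro w h; rw [sigs_def, h, Finset.sum_empty]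
    have hV2s : ∀ w w' : V, Reach ep1 ep2 L f w → Reach ep1 ep2 L f w' →
        chains L w = chains L w' → sigs L c w = sigs L c w' := by
      intro w w' _ _ h; rw [sigs_def, sigs_def, h]
    have finishA : ∀ (A : AddSubgroup ℝ) (val : V → ℝ),
        (∀ w, chains L w = ∅ → val w = 0) →
        (∀ w, Reach ep1 ep2 L f w → val w ∈ A) →
        (∀ w w', Reach ep1 ep2 L f w → Reach ep1 ep2 L f w' → chains L w = chains L w' →
          val w = val w') →
        (∀ g : E, Reach ep1 ep2 L f (ep1 g) →
          (chains L (ep1 g) ∩ chains L (ep2 g) = ∅ →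
            val (ep1 g) + val (ep2 g) = (if g = f then (1:ℝ) else 0)) ∧
          (chains L (ep1 g) ⊆ chains L (ep2 g) →
            val (ep2 g) - val (ep1 g) = (if g = f then (1:ℝ) else 0)) ∧
          (chains L (ep2 g) ⊆ chains L (ep1 g) →
            val (ep1 g) - val (ep2 g) = (if g = f then (1:ℝ) else 0))) →
        xs f ∈ A := by
      intro A val h0 h1 h2 h3
      obtain ⟨d, hdA, hd⟩ := construct ep1 ep2 L hlam hnochild f A val h0 h1 h2 h3
      rw [← key_sum ep1 ep2 L b xs heq f d hd]
      refine AddSubgroup.sum_mem A fun S hS => ?_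
      rw [show d S * (b S : ℝ) = (b S) • d S from by rw [nsmul_eq_mul]; ring]
      exact AddSubgroup.nsmul_mem A (hdA S) _
    have hAh1 : (1:ℝ) ∈ AddSubgroup.zmultiples (2⁻¹:ℝ) :=
      AddSubgroup.mem_zmultiples_iff.mpr ⟨2, by rw [zsmul_eq_mul]; norm_num⟩
    have hAz1 : (1:ℝ) ∈ AddSubgroup.zmultiples (1:ℝ) :=
      AddSubgroup.mem_zmultiples_iff.mpr ⟨1, by rw [zsmul_eq_mul]; norm_num⟩
    have noint : xs f ∈ AddSubgroup.zmultiples (1:ℝ) → False := by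
      intro hx
      obtain ⟨k, hk⟩ := AddSubgroup.mem_zmultiples_iff.mp hx
      rw [zsmul_eq_mul, mul_one] at hk
      have hb := hbounds f
      have h0 : (0:ℤ) < k := by
        have : (0:ℝ) < (k:ℝ) := by rw [hk]; exact hb.1
        exact_mod_cast this
      have h1 : k < 1 := by
        have : (k:ℝ) < 1 := by rw [hk]; exact hb.2
        exact_mod_cast this
      omega
    by_cases hhalf : sigs L c (ep1 f) ∈ AddSubgroup.zmultiples (2⁻¹:ℝ)
    · have hx : xs f ∈ AddSubgroup.zmultiples (2⁻¹:ℝ) :=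
        finishA _ (sigs L c) hV0s (prop _ hAh1 hhalf) hV2s (fun g _ => SIG g)
      obtain ⟨k, hk⟩ := AddSubgroup.mem_zmultiples_iff.mp hx
      rw [zsmul_eq_mul] at hk
      have hb := hbounds f
      have hk1 : k = 1 := by
        have hk0 : (0:ℝ) < (k:ℝ) := by nlinarith [hb.1]
        have hk2 : (k:ℝ) < 2 := by nlinarith [hb.2]
        have h0' : (0:ℤ) < k := by exact_mod_cast hk0
        have h2' : k < 2 := by exact_mod_cast hk2
        omega
      have hxf : xs f = 1/2 := by
        rw [← hk, hk1]; norm_num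
      refine ⟨hxf, ?_, ?_⟩
      · by_contra hcov
        have hemp : chains L (ep1 f) = ∅ := by
          rw [chains, Finset.filter_eq_empty_iff]
          intro S hS hx'
          exact hcov ⟨S, hS, hx'⟩
        have hz : sigs L c (ep1 f) ∈ AddSubgroup.zmultiples (1:ℝ) := by
          rw [hV0s _ hemp]; exact zero_mem _
        exact noint (finishA _ (sigs L c) hV0s (prop _ hAz1 hz) hV2s (fun g _ => SIG g))
      · by_contra hcov
        have hempv : chains L (ep2 f) = ∅ := by
          rw [chains, Finset.filter_eq_empty_iff]
          intro S hS hx'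
          exact hcov ⟨S, hS, hx'⟩
        have hz : sigs L c (ep1 f) ∈ AddSubgroup.zmultiples (1:ℝ) := by
          have hsv : sigs L c (ep2 f) = 0 := hV0s _ hempv
          rcases edge_type ep1 ep2 L hlam hnochild f with h | h | h
          · have h0 := (SIG f).1 h
            rw [if_pos rfl, hsv] at h0
            rw [show sigs L c (ep1 f) = (1:ℝ) from by linarith]
            exact hAz1
          · have hempu : chains L (ep1 f) = ∅ := Finset.subset_empty.mp (hempv ▸ h)
            rw [hV0s _ hempu]; exact zero_mem _
          · have h0 := (SIG f).2.2 h
            rw [if_pos rfl, hsv] at h0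
            rw [show sigs L c (ep1 f) = (1:ℝ) from by linarith]
            exact hAz1
        exact noint (finishA _ (sigs L c) hV0s (prop _ hAz1 hz) hV2s (fun g _ => SIG g))
    · exfalso
      have sound : ∀ (w : V) (a β : ℤ), Wk ep1 ep2 L f w a β →
          sigs L c w = (a:ℝ) * sigs L c (ep1 f) + (β:ℝ) := by
        intro w a β hw
        induction hw with
        | base => push_cast; ring
        | fwd0 g a1 β1 hw1 h ih =>
          have h0 := (SIG g).1 h
          push_cast
          linarith
        | fwd1 g a1 β1 hw1 h ih =>
          have h0 := (SIG g).2.1 h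
          push_cast
          linarith
        | fwd2 g a1 β1 hw1 h ih =>
          have h0 := (SIG g).2.2 h
          push_cast
          linarith
        | bwd0 g a1 β1 hw1 h ih =>
          have h0 := (SIG g).1 h
          push_cast
          linarith
        | bwd1 g a1 β1 hw1 h ih =>
          have h0 := (SIG g).2.1 h
          push_cast
          linarith
        | bwd2 g a1 β1 hw1 h ih =>
          have h0 := (SIG g).2.2 h
          push_cast
          linarith
        | uncov w1 h =>
          rw [sigs_def, h, Finset.sum_empty]
          push_cast
          ring
        | eqs w1 w1' a1 β1 hw1 hch ih =>
          have he : sigs L c w1' = sigs L c w1 := by rw [sigs_def, sigs_def, ← hch]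
          rw [he]; exact ih
      have aval : ∀ (w : V) (a β : ℤ), Wk ep1 ep2 L f w a β → a = 1 ∨ a = -1 ∨ a = 0 := by
        intro w a β hw
        induction hw with
        | base => left; rfl
        | fwd0 g a1 β1 hw1 h ih => rcases ih with h'|h'|h' <;> omega
        | fwd1 g a1 β1 hw1 h ih => exact ih
        | fwd2 g a1 β1 hw1 h ih => exact ih
        | bwd0 g a1 β1 hw1 h ih => rcases ih with h'|h'|h' <;> omega
        | bwd1 g a1 β1 hw1 h ih => exact ih
        | bwd2 g a1 β1 hw1 h ih => exact ih
        | uncov w1 h => right; right; rfl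
        | eqs w1 w1' a1 β1 hw1 hch ih => exact ih
      have uniq : ∀ (w : V) (a β a' β' : ℤ), Wk ep1 ep2 L f w a β → Wk ep1 ep2 L f w a' β' →
          a = a' ∧ β = β' := by
        intro w a β a' β' h h'
        have e1 := sound _ _ _ h
        have e2 := sound _ _ _ h'
        have hdiff : ((a:ℝ) - (a':ℝ)) * sigs L c (ep1 f) = (β':ℝ) - (β:ℝ) := by
          linear_combination e2 - e1
        by_cases haa : a = a'
        · subst haa
          refine ⟨rfl, ?_⟩
          have hb0 : (β':ℝ) - (β:ℝ) = 0 := by rw [← hdiff]; ring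
          have : (β:ℝ) = (β':ℝ) := by linarith
          exact_mod_cast this
        · exfalso
          apply hhalf
          have hd4 : a - a' = 1 ∨ a - a' = -1 ∨ a - a' = 2 ∨ a - a' = -2 := by
            rcases aval _ _ _ h with h1|h1|h1 <;> rcases aval _ _ _ h' with h2|h2|h2 <;> omega
          rcases hd4 with hd|hd|hd|hd
          · have hca : ((a:ℝ) - (a':ℝ)) = 1 := by
              have hq : ((a - a' : ℤ) : ℝ) = 1 := by rw [hd]; norm_num
              push_cast at hq; linarith
            rw [hca] at hdiff
            refine AddSubgroup.mem_zmultiples_iff.mpr ⟨2*(β' - β), ?_⟩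
            rw [zsmul_eq_mul]; push_cast; linarith
          · have hca : ((a:ℝ) - (a':ℝ)) = -1 := by
              have hq : ((a - a' : ℤ) : ℝ) = -1 := by rw [hd]; norm_num
              push_cast at hq; linarith
            rw [hca] at hdiff
            refine AddSubgroup.mem_zmultiples_iff.mpr ⟨2*(β - β'), ?_⟩
            rw [zsmul_eq_mul]; push_cast; linarith
          · have hca : ((a:ℝ) - (a':ℝ)) = 2 := by
              have hq : ((a - a' : ℤ) : ℝ) = 2 := by rw [hd]; norm_num
              push_cast at hq; linarith
            rw [hca] at hdiff
            refine AddSubgroup.mem_zmultiples_iff.mpr ⟨β' - β, ?_⟩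
            rw [zsmul_eq_mul]; push_cast; linarith
          · have hca : ((a:ℝ) - (a':ℝ)) = -2 := by
              have hq : ((a - a' : ℤ) : ℝ) = -2 := by rw [hd]; norm_num
              push_cast at hq; linarith
            rw [hca] at hdiff
            refine AddSubgroup.mem_zmultiples_iff.mpr ⟨β - β', ?_⟩
            rw [zsmul_eq_mul]; push_cast; linarith
      have reachW : ∀ w, Reach ep1 ep2 L f w → ∃ a β : ℤ, Wk ep1 ep2 L f w a β := by
        intro w hw
        induction hw with
        | base => exact ⟨1, 0, Wk.base⟩
        | fwd g hg ih =>
          obtain ⟨a, β, hab⟩ := ih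
          rcases edge_type ep1 ep2 L hlam hnochild g with h|h|h
          · exact ⟨_, _, Wk.fwd0 g a β hab h⟩
          · exact ⟨_, _, Wk.fwd1 g a β hab h⟩
          · exact ⟨_, _, Wk.fwd2 g a β hab h⟩
        | bwd g hg ih =>
          obtain ⟨a, β, hab⟩ := ih
          rcases edge_type ep1 ep2 L hlam hnochild g with h|h|h
          · exact ⟨_, _, Wk.bwd0 g a β hab h⟩
          · exact ⟨_, _, Wk.bwd1 g a β hab h⟩
          · exact ⟨_, _, Wk.bwd2 g a β hab h⟩
        | eqs w1 w1' hw1 hch ih =>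
          obtain ⟨a, β, hab⟩ := ih
          exact ⟨_, _, Wk.eqs w1 w1' a β hab hch⟩
      set val : V → ℝ := fun w =>
        if h : ∃ ab : ℤ × ℤ, Wk ep1 ep2 L f w ab.1 ab.2 then ((h.choose.2 : ℤ) : ℝ) else 0
        with hvaldef
      have valW : ∀ (w : V) (a β : ℤ), Wk ep1 ep2 L f w a β → val w = (β:ℝ) := by
        intro w a β h
        have hex : ∃ ab : ℤ × ℤ, Wk ep1 ep2 L f w ab.1 ab.2 := ⟨(a, β), h⟩
        rw [hvaldef]
        dsimp only
        rw [dif_pos hex]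
        have hu := (uniq w _ _ _ _ hex.choose_spec h).2
        exact_mod_cast hu
      have hx : xs f ∈ AddSubgroup.zmultiples (1:ℝ) := by
        refine finishA _ val ?_ ?_ ?_ ?_
        · intro w h
          rw [valW w 0 0 (Wk.uncov w h)]; norm_num
        · intro w hw
          obtain ⟨a, β, hab⟩ := reachW w hw
          rw [valW _ _ _ hab]
          exact AddSubgroup.mem_zmultiples_iff.mpr ⟨β, by rw [zsmul_eq_mul, mul_one]⟩
        · intro w w' hw hw' hch
          obtain ⟨a, β, hab⟩ := reachW w hw
          rw [valW _ _ _ hab, valW _ _ _ (Wk.eqs w w' a β hab hch)]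
        · intro g hrg
          obtain ⟨a, β, hab⟩ := reachW _ hrg
          refine ⟨fun h => ?_, fun h => ?_, fun h => ?_⟩
          · rw [valW _ _ _ hab, valW _ _ _ (Wk.fwd0 g a β hab h)]
            push_cast
            ring
          · rw [valW _ _ _ hab, valW _ _ _ (Wk.fwd1 g a β hab h)]
            push_cast
            ring
          · rw [valW _ _ _ hab, valW _ _ _ (Wk.fwd2 g a β hab h)]
            push_cast
            ring
      exact noint hx
  exact ⟨fun e => (per_f e).1, fun e => (per_f e).2⟩
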